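/- PMEPR bound for complementary sets: if {e^0,...,e^{M-1}} is a complementary set of M unimodular sequences of length N, then for each l and every real θ, |sum_{k=0}^{N-1} e^l_k e^{i k θ}|^2 ≤ MN; hence each member sequence has PMEPR at most M. -/

import Mathlib

open Finset Complex

/-- Extension of a length-`N` sequence to `ℤ` by zero outside `[0, N)`. -/
noncomputable def extSeq (N : ℕ) (d : ℕ → ℂ) : ℤ → ℂ :=
  fun i => if 0 ≤ i ∧ i < (N : ℤ) then d i.toNat else 0

/-- Aperiodic cross-correlation of length-`N` complex sequences at integer shift `s`. -/
noncomputable def acorr (N : ℕ) (d e : ℕ → ℂ) (s : ℤ) : ℂ :=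
  ∑ k ∈ Finset.range N, extSeq N d k * (starRingEnd ℂ) (extSeq N e (k + s))

/-- Aperiodic autocorrelation. -/
noncomputable def aauto (N : ℕ) (e : ℕ → ℂ) (s : ℤ) : ℂ := acorr N e e s

/-- Golay complementary pair of length `N`. -/
def IsGCP (N : ℕ) (a b : ℕ → ℂ) : Prop :=
  ∀ s : ℤ, s ≠ 0 → aauto N a s + aauto N b s = 0

private lemma extSeq_nat (N : ℕ) (d : ℕ → ℂ) (k : ℕ) (hk : k < N) :
    extSeq N d (k : ℤ) = d k := by
  unfold extSeq
  rw [if_pos ⟨Int.ofNat_nonneg k, by exact_mod_cast hk⟩]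
  simp

private lemma rebin (N : ℕ) (e : ℕ → ℂ) (θ : ℝ) (k : ℕ) (hk : k < N) :
    ∑ k' ∈ Finset.range N,
      e k * (starRingEnd ℂ) (e k') * Complex.exp (Complex.I * ((k : ℂ) - (k' : ℂ)) * θ)
    = ∑ s ∈ Finset.Icc (-(N : ℤ)) (N : ℤ),
        extSeq N e (k : ℤ) * (starRingEnd ℂ) (extSeq N e ((k : ℤ) + s)) *
          Complex.exp (-(Complex.I * (s : ℂ) * θ)) := by
  rw [← Finset.sum_subset
      (Finset.filter_subset (fun s => 0 ≤ (k:ℤ) + s ∧ (k:ℤ) + s < (N:ℤ)) _)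
      (by
        intro s hs hns
        have h0 : extSeq N e ((k:ℤ) + s) = 0 := by
          unfold extSeq
          rw [if_neg]
          intro h
          exact hns (Finset.mem_filter.mpr ⟨hs, h⟩)
        simp [h0])]
  refine Finset.sum_nbij' (fun k' => (k' : ℤ) - (k : ℤ)) (fun s => ((k:ℤ) + s).toNat) ?_ ?_ ?_ ?_ ?_
  · intro k' hk'
    simp only [Finset.mem_range] at hk'
    simp only [Finset.mem_filter, Finset.mem_Icc]
    omega
  · intro s hs
    simp only [Finset.mem_filter, Finset.mem_Icc] at hs
    simp only [Finset.mem_range]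
    omega
  · intro k' hk'
    simp only [Finset.mem_range] at hk'
    show ((k:ℤ) + ((k':ℤ) - (k:ℤ))).toNat = k'
    omega
  · intro s hs
    simp only [Finset.mem_filter, Finset.mem_Icc] at hs
    show ((((k:ℤ) + s).toNat : ℤ)) - (k:ℤ) = s
    omega
  · intro k' hk'
    simp only [Finset.mem_range] at hk'
    have h1 : extSeq N e (k : ℤ) = e k := extSeq_nat N e k hk
    have h2 : extSeq N e ((k:ℤ) + ((k':ℤ) - (k:ℤ))) = e k' := by
      rw [show (k:ℤ) + ((k':ℤ) - (k:ℤ)) = (k':ℤ) by ring]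
      exact extSeq_nat N e k' hk'
    rw [h1, h2]
    congr 1
    congr 1
    push_cast
    ring

/-- PMEPR bound for complementary sets: each member of a complementary
set of `M` unimodular length-`N` sequences satisfies `|S(θ)|² ≤ MN`. -/
theorem cs_pmepr_le_M (M N : ℕ) (e : Fin M → ℕ → ℂ)
    (huni : ∀ l, ∀ k < N, ‖e l k‖ = 1)
    (hcs : ∀ s : ℤ, s ≠ 0 → ∑ l : Fin M, aauto N (e l) s = 0)
    (l : Fin M) (θ : ℝ) :
    ‖∑ k ∈ Finset.range N,
        e l k * Complex.exp (Complex.I * k * θ)‖ ^ 2 ≤ M * N := by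
  set S : Fin M → ℂ := fun l => ∑ k ∈ Finset.range N, e l k * Complex.exp (Complex.I * k * θ)
    with hS
  -- step 1 : S l * conj (S l) as a sum over shifts
  have step1 : ∀ m : Fin M, S m * (starRingEnd ℂ) (S m)
      = ∑ s ∈ Finset.Icc (-(N:ℤ)) (N:ℤ),
          Complex.exp (-(Complex.I * (s:ℂ) * θ)) * aauto N (e m) s := by
    intro m
    have hconj : (starRingEnd ℂ) (S m)
        = ∑ k' ∈ Finset.range N,
            (starRingEnd ℂ) (e m k') * Complex.exp (-(Complex.I * (k':ℂ) * θ)) := by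
      rw [hS]
      rw [map_sum]
      refine Finset.sum_congr rfl fun k' _ => ?_
      rw [map_mul, ← Complex.exp_conj]
      congr 1
      simp [Complex.conj_I, Complex.conj_ofReal]
    rw [hconj, hS]
    rw [Finset.sum_mul_sum]
    have : ∀ k ∈ Finset.range N,
        ∑ k' ∈ Finset.range N,
          (e m k * Complex.exp (Complex.I * (k:ℂ) * θ)) *
            ((starRingEnd ℂ) (e m k') * Complex.exp (-(Complex.I * (k':ℂ) * θ)))
        = ∑ s ∈ Finset.Icc (-(N:ℤ)) (N:ℤ),
            extSeq N (e m) (k : ℤ) * (starRingEnd ℂ) (extSeq N (e m) ((k:ℤ) + s)) *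
              Complex.exp (-(Complex.I * (s:ℂ) * θ)) := by
      intro k hk
      rw [← rebin N (e m) θ k (Finset.mem_range.mp hk)]
      refine Finset.sum_congr rfl fun k' _ => ?_
      rw [mul_mul_mul_comm, ← Complex.exp_add]
      congr 2
      ring
    rw [Finset.sum_congr rfl this, Finset.sum_comm]
    refine Finset.sum_congr rfl fun s _ => ?_
    unfold aauto acorr
    rw [Finset.mul_sum]
    refine Finset.sum_congr rfl fun k _ => ?_
    ring
  -- step 2 : the total sum is M * N
  have key : ∑ m : Fin M, S m * (starRingEnd ℂ) (S m) = (M : ℂ) * (N : ℂ) := by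
    rw [Finset.sum_congr rfl fun m _ => step1 m, Finset.sum_comm]
    rw [Finset.sum_eq_single_of_mem (0 : ℤ)
        (Finset.mem_Icc.mpr ⟨by omega, by omega⟩)
        (by
          intro s _ hs
          rw [← Finset.mul_sum, hcs s hs, mul_zero])]
    have h0 : ∀ m : Fin M, aauto N (e m) 0 = (N : ℂ) := by
      intro m
      unfold aauto acorr
      have hterm : ∀ k ∈ Finset.range N,
          extSeq N (e m) (k : ℤ) * (starRingEnd ℂ) (extSeq N (e m) ((k:ℤ) + 0)) = 1 := by
        intro k hk
        have hk' := Finset.mem_range.mp hk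
        rw [add_zero, extSeq_nat _ _ _ hk', Complex.mul_conj, Complex.normSq_eq_norm_sq,
          huni m k hk']
        norm_num
      rw [Finset.sum_congr rfl hterm, Finset.sum_const, Finset.card_range]
      simp
    simp only [Int.cast_zero, mul_zero, zero_mul, neg_zero, Complex.exp_zero, one_mul]
    rw [Finset.sum_congr rfl fun m _ => h0 m, Finset.sum_const, Finset.card_univ,
      Fintype.card_fin]
    simp
  -- step 3 : conclude
  have key' : ∑ m : Fin M, Complex.normSq (S m) = (M : ℝ) * (N : ℝ) := by
    have : ((∑ m : Fin M, Complex.normSq (S m) : ℝ) : ℂ) = ((M : ℝ) * (N : ℝ) : ℂ) := by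
      push_cast
      rw [← key]
      refine Finset.sum_congr rfl fun m _ => ?_
      rw [Complex.mul_conj]
    exact_mod_cast this
  have hle : Complex.normSq (S l) ≤ ∑ m : Fin M, Complex.normSq (S m) :=
    Finset.single_le_sum (fun m _ => Complex.normSq_nonneg (S m)) (Finset.mem_univ l)
  calc ‖S l‖ ^ 2 = Complex.normSq (S l) := (Complex.normSq_eq_norm_sq (S l)).symm
    _ ≤ ∑ m : Fin M, Complex.normSq (S m) := hle
    _ = (M : ℝ) * (N : ℝ) := key'
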